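/- Let A = (e^2 - 3e + 1)/(e^2 - 2e + 1) and B = 1/12. For every p with A < p < B, there exists a unique x_0 \in (0,1) such that 1/x^2 - e^{-x}/(1 - e^{-x})^2 = p; moreover 1/x^2 - e^{-x}/(1-e^{-x})^2 > p for x \in (0, x_0) and < p for x \in (x_0, 1). -/

import Mathlib

open Real

lemma exp_lb {t : ℝ} (ht : 0 ≤ t) :
    1 + t + t^2/2 + t^3/6 + t^4/24 + t^5/120 ≤ Real.exp t := by
  have h := Real.sum_le_exp_of_nonneg ht 6
  simp [Finset.sum_range_succ, Nat.factorial] at h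
  linarith [h]

lemma exp_ub {t : ℝ} (ht : 0 ≤ t) (ht1 : t ≤ 1) :
    Real.exp t ≤ 1 + t + t^2/2 + t^3/6 + t^4/24 + t^5/100 := by
  have h := Real.exp_bound' ht ht1 (n := 5) (by norm_num)
  simp [Finset.sum_range_succ, Nat.factorial] at h
  nlinarith [h, pow_nonneg ht 5]


lemma sinh_lb {t : ℝ} (ht : 0 ≤ t) :
    2 * Real.exp t * (t + t^3/6) ≤ Real.exp t ^ 2 - 1 := by
  have hL := exp_lb ht
  have h2 : 0 ≤ Real.exp t + (1 + t + t^2/2 + t^3/6 + t^4/24 + t^5/120) - 2*(t + t^3/6) := by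
    nlinarith [pow_nonneg ht 2, pow_nonneg ht 4, pow_nonneg ht 5]
  have h1 : 0 ≤ (Real.exp t - (1 + t + t^2/2 + t^3/6 + t^4/24 + t^5/120)) *
      (Real.exp t + (1 + t + t^2/2 + t^3/6 + t^4/24 + t^5/120) - 2*(t + t^3/6)) :=
    mul_nonneg (by linarith) h2
  nlinarith [h1, pow_nonneg ht 5, pow_nonneg ht 6, pow_nonneg ht 7, pow_nonneg ht 8,
    pow_nonneg ht 9, pow_nonneg ht 10]

lemma cosh_ub {t : ℝ} (ht : 0 ≤ t) (ht2 : t ≤ 1/2) :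
    Real.exp t ^ 2 + 1 ≤ 2 * Real.exp t * (1 + t^2/2 + t^4/12) := by
  have hU := exp_ub ht (by linarith)
  have hL := exp_lb ht
  have hc : 0 ≤ Real.exp t + (1 + t + t^2/2 + t^3/6 + t^4/24 + t^5/100) - 2*(1 + t^2/2 + t^4/12) := by
    nlinarith [pow_nonneg ht 3, pow_nonneg ht 5, pow_nonneg ht 4]
  have h1 : (Real.exp t - (1 + t + t^2/2 + t^3/6 + t^4/24 + t^5/100)) *
      (Real.exp t + (1 + t + t^2/2 + t^3/6 + t^4/24 + t^5/100) - 2*(1 + t^2/2 + t^4/12)) ≤ 0 :=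
    mul_nonpos_of_nonpos_of_nonneg (by linarith) hc
  nlinarith [h1, pow_nonneg ht 4, pow_nonneg ht 5, pow_nonneg ht 6, pow_nonneg ht 7,
    pow_nonneg ht 8, pow_nonneg ht 9, mul_nonneg (pow_nonneg ht 8) (sub_nonneg.2 ht2)]


-- Master inequality: derivative negativity core
lemma masterM {x : ℝ} (hx : 0 < x) (hx1 : x ≤ 1) :
    x^3 * Real.exp (-x) * (1 + Real.exp (-x)) < 2 * (1 - Real.exp (-x))^3 := by
  have ht : 0 < x/2 := by positivity
  have ht2 : x/2 ≤ 1/2 := by linarith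
  set t := x/2 with htdef
  set a := Real.exp t with hadef
  have hax : a ^ 2 = Real.exp x := by
    rw [hadef, sq, ← Real.exp_add]; congr 1; rw [htdef]; ring
  have haE : Real.exp (-x) = (a ^ 2)⁻¹ := by rw [hax]; exact Real.exp_neg x
  have ha1 : (1:ℝ) < a := by rw [hadef]; exact Real.one_lt_exp_iff.mpr ht
  have ha0 : (0:ℝ) < a := by linarith
  have hs := sinh_lb ht.le
  have hc := cosh_ub ht.le ht2
  rw [← hadef] at hs hc
  -- key inequality in a-variables
  have hst : t^3 * (1 + t^2/2 + t^4/12) < (t + t^3/6)^3 := by nlinarith [pow_pos ht 9]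
  have hs' : (2*a*(t + t^3/6))^3 ≤ (a^2-1)^3 := by
    apply pow_le_pow_left₀ (by positivity) hs
  have key : 8*t^3*a^2*(a^2+1) < 2*(a^2-1)^3 := by
    have h6 : 8*t^3*a^2*(a^2+1) ≤ 8*t^3*a^2*(2*a*(1 + t^2/2 + t^4/12)) := by
      apply mul_le_mul_of_nonneg_left hc (by positivity)
    have h7 : 16*a^3*(t^3*(1 + t^2/2 + t^4/12)) < 16*a^3*(t + t^3/6)^3 := by
      apply mul_lt_mul_of_pos_left hst (by positivity)
    nlinarith [h6, h7, hs']
  have hxt : x = 2*t := by rw [htdef]; ring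
  have expand : 2*(1 - (a^2)⁻¹)^3 - (2*t)^3 * (a^2)⁻¹ * (1 + (a^2)⁻¹)
      = (2*(a^2-1)^3 - 8*t^3*a^2*(a^2+1)) / (a^2)^3 := by
    field_simp
    ring
  rw [haE, hxt]
  have hpos : 0 < (2*(a^2-1)^3 - 8*t^3*a^2*(a^2+1)) / (a^2)^3 := by
    apply div_pos (by linarith) (by positivity)
  linarith [expand, hpos]

-- Near-zero lower bound
lemma nearZero {x : ℝ} (hx : 0 < x) (hx1 : x ≤ 1) :
    1/12 - x^2 < 1/x^2 - Real.exp (-x)/(1 - Real.exp (-x))^2 := by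
  have ht : 0 < x/2 := by positivity
  have ht2 : x/2 ≤ 1/2 := by linarith
  set t := x/2 with htdef
  set a := Real.exp t with hadef
  have hax : a ^ 2 = Real.exp x := by
    rw [hadef, sq, ← Real.exp_add]; congr 1; rw [htdef]; ring
  have haE : Real.exp (-x) = (a ^ 2)⁻¹ := by rw [hax]; exact Real.exp_neg x
  have ha1 : (1:ℝ) < a := by rw [hadef]; exact Real.one_lt_exp_iff.mpr ht
  have ha0 : (0:ℝ) < a := by linarith
  have hane : a^2 - 1 ≠ 0 := by nlinarith
  have hs := sinh_lb ht.le
  rw [← hadef] at hs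
  have hs2 : (2*a*(t + t^3/6))^2 ≤ (a^2-1)^2 := by
    apply pow_le_pow_left₀ (by positivity) hs
  have hpoly : 12*t^2 < (t + t^3/6)^2 * (12 - 4*t^2 + 192*t^4) := by
    nlinarith [pow_pos ht 6, pow_pos ht 8, pow_pos ht 10, pow_pos ht 2]
  have hcoef : (0:ℝ) < 12 - 4*t^2 + 192*t^4 := by nlinarith [sq_nonneg t, pow_nonneg ht.le 4]
  have key : 48*t^2*a^2 < (a^2-1)^2 * (12 - 4*t^2 + 192*t^4) := by
    have h1 : (2*a*(t + t^3/6))^2 * (12 - 4*t^2 + 192*t^4)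
        ≤ (a^2-1)^2 * (12 - 4*t^2 + 192*t^4) :=
      mul_le_mul_of_nonneg_right hs2 hcoef.le
    nlinarith [mul_lt_mul_of_pos_left hpoly (show (0:ℝ) < 4*a^2 by positivity), h1]
  have hxt : x = 2*t := by rw [htdef]; ring
  rw [haE, hxt]
  have expand : (1/(2*t)^2 - (a^2)⁻¹/(1 - (a^2)⁻¹)^2) - (1/12 - (2*t)^2)
      = ((a^2-1)^2 * (12 - 4*t^2 + 192*t^4) - 48*t^2*a^2) / (48*t^2*(a^2-1)^2) := by
    field_simp
    ring
  have hpos : 0 < ((a^2-1)^2 * (12 - 4*t^2 + 192*t^4) - 48*t^2*a^2) / (48*t^2*(a^2-1)^2) := by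
    apply div_pos (by linarith)
    have : (a^2-1)^2 > 0 := by positivity
    positivity
  linarith [expand, hpos]

noncomputable def Fn : ℝ → ℝ := fun x => 1/x^2 - Real.exp (-x)/(1 - Real.exp (-x))^2

lemma Fn_hasDeriv {x : ℝ} (hx : 0 < x) :
    HasDerivAt Fn
      ((0*x^2 - 1*(2*x^1))/(x^2)^2 -
        ((Real.exp (-x)*(-1))*(1-Real.exp (-x))^2 -
          Real.exp (-x)*(2*(1-Real.exp (-x))^1*(0 - Real.exp (-x)*(-1))))/((1-Real.exp (-x))^2)^2) x := by
  have hE1 : Real.exp (-x) < 1 := Real.exp_lt_one_iff.mpr (by linarith)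
  have hden : (1 - Real.exp (-x))^2 ≠ 0 := pow_ne_zero 2 (by linarith)
  have h1 : HasDerivAt (fun y : ℝ => 1/y^2) ((0*x^2 - 1*(2*x^1))/(x^2)^2) x :=
    (hasDerivAt_const x (1:ℝ)).div (hasDerivAt_pow 2 x) (by positivity)
  have h2a : HasDerivAt (fun y : ℝ => Real.exp (-y)) (Real.exp (-x) * (-1)) x :=
    (hasDerivAt_neg x).exp
  have h2b : HasDerivAt (fun y : ℝ => 1 - Real.exp (-y)) (0 - Real.exp (-x) * (-1)) x :=
    (hasDerivAt_const x (1:ℝ)).sub h2a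
  have h2c : HasDerivAt (fun y : ℝ => (1 - Real.exp (-y))^2)
      (2*(1-Real.exp (-x))^1*(0 - Real.exp (-x)*(-1))) x := by
    have := h2b.fun_pow 2
    simpa using this
  exact h1.sub (h2a.div h2c hden)

lemma Fn_deriv_neg {x : ℝ} (hx : 0 < x) (hx1 : x < 1) : deriv Fn x < 0 := by
  rw [(Fn_hasDeriv hx).deriv]
  have hE1 : Real.exp (-x) < 1 := Real.exp_lt_one_iff.mpr (by linarith)
  have hE0 : 0 < Real.exp (-x) := Real.exp_pos _
  have key := masterM hx hx1.le
  set E := Real.exp (-x) with hEdef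
  have hexpand : (0*x^2 - 1*(2*x^1))/(x^2)^2 -
      ((E*(-1))*(1-E)^2 - E*(2*(1-E)^1*(0 - E*(-1))))/((1-E)^2)^2
      = (x^3 * E * (1+E) - 2*(1-E)^3) / (x^3 * (1-E)^3) := by
    have h1 : (1:ℝ) - E ≠ 0 := by linarith
    field_simp
    ring
  rw [hexpand]
  have h10 : (0:ℝ) < 1 - E := by linarith
  apply div_neg_of_neg_of_pos (by linarith) (by positivity)

lemma Fn_contOn {x : ℝ} (hx : 0 < x) : ContinuousOn Fn (Set.Icc x 1) := by
  apply ContinuousOn.sub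
  · apply ContinuousOn.div continuousOn_const (by fun_prop)
    intro z hz
    have : 0 < z := lt_of_lt_of_le hx hz.1
    exact pow_ne_zero 2 this.ne'
  · apply ContinuousOn.div (by fun_prop) (by fun_prop)
    intro z hz
    have hz0 : 0 < z := lt_of_lt_of_le hx hz.1
    have : Real.exp (-z) < 1 := Real.exp_lt_one_iff.mpr (by linarith)
    exact pow_ne_zero 2 (by linarith)

lemma Fn_anti {x y : ℝ} (hx : 0 < x) (hxy : x < y) (hy : y ≤ 1) : Fn y < Fn x := by
  have hcont : ContinuousOn Fn (Set.Icc x 1) := Fn_contOn hx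
  have hanti : StrictAntiOn Fn (Set.Icc x 1) := by
    apply strictAntiOn_of_deriv_neg (convex_Icc x 1) hcont
    intro z hz
    rw [interior_Icc] at hz
    exact Fn_deriv_neg (lt_trans hx hz.1) hz.2
  exact hanti ⟨le_refl x, by linarith⟩ ⟨hxy.le, hy⟩ hxy

lemma Fn_one : Fn 1 = (Real.exp 1 ^ 2 - 3 * Real.exp 1 + 1) / (Real.exp 1 ^ 2 - 2 * Real.exp 1 + 1) := by
  have he : (1:ℝ) < Real.exp 1 := by
    have := Real.add_one_le_exp (1:ℝ); linarith
  have h1 : Real.exp (-1 : ℝ) = (Real.exp 1)⁻¹ := Real.exp_neg 1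
  unfold Fn
  rw [h1]
  generalize Real.exp 1 = e at he ⊢
  have he0 : (0:ℝ) < e := by linarith
  have hne : e - 1 ≠ 0 := by linarith
  have hden : e^2 - 2*e + 1 ≠ 0 := by
    have : e^2 - 2*e + 1 = (e-1)^2 := by ring
    rw [this]; exact pow_ne_zero 2 hne
  have hne2 : 1 - e⁻¹ ≠ 0 := by
    have : e⁻¹ < 1 := by rw [inv_lt_one_iff₀]; right; exact he
    linarith
  field_simp
  rw [eq_div_iff (by convert hden using 1; ring)]
  ring

theorem stmt15 (p : ℝ)
    (hA : (Real.exp 1 ^ 2 - 3 * Real.exp 1 + 1) / (Real.exp 1 ^ 2 - 2 * Real.exp 1 + 1) < p)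
    (hB : p < 1 / 12) :
    ∃! x₀ : ℝ, x₀ ∈ Set.Ioo (0 : ℝ) 1 ∧
      (1 / x₀ ^ 2 - Real.exp (-x₀) / (1 - Real.exp (-x₀)) ^ 2 = p ∧
       (∀ x ∈ Set.Ioo (0 : ℝ) x₀, 1 / x ^ 2 - Real.exp (-x) / (1 - Real.exp (-x)) ^ 2 > p) ∧
       (∀ x ∈ Set.Ioo x₀ (1 : ℝ), 1 / x ^ 2 - Real.exp (-x) / (1 - Real.exp (-x)) ^ 2 < p)) := by
  have hf1 : Fn 1 < p := by rw [Fn_one]; exact hA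
  have hegt := Real.exp_one_gt_d9
  have helt := Real.exp_one_lt_d9
  have hApos : (0:ℝ) < (Real.exp 1 ^ 2 - 3 * Real.exp 1 + 1) / (Real.exp 1 ^ 2 - 2 * Real.exp 1 + 1) := by
    apply div_pos <;> nlinarith
  have hp0 : 0 < p := lt_trans hApos hA
  have hq0 : 0 < 1/12 - p := by linarith
  set a₀ := Real.sqrt (1/12 - p) with ha₀def
  have ha₀0 : 0 < a₀ := Real.sqrt_pos.mpr hq0
  have ha₀sq : a₀^2 = 1/12 - p := Real.sq_sqrt hq0.le
  have ha₀le : a₀ ≤ 1/2 := by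
    have h1 : a₀ ≤ Real.sqrt (1/4) := Real.sqrt_le_sqrt (by linarith)
    have h2 : Real.sqrt (1/4) = 1/2 := by
      rw [show (1/4:ℝ) = (1/2)^2 by norm_num, Real.sqrt_sq (by norm_num)]
    linarith
  have ha₀1 : a₀ < 1 := by linarith
  have hfa : p < Fn a₀ := by
    have h := nearZero ha₀0 (by linarith)
    have : Fn a₀ = 1/a₀^2 - Real.exp (-a₀)/(1 - Real.exp (-a₀))^2 := rfl
    rw [this]
    linarith
  obtain ⟨x₀, hx₀mem, hfx₀⟩ := intermediate_value_Ioo' ha₀1.le (Fn_contOn ha₀0) ⟨hf1, hfa⟩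
  have hx₀0 : 0 < x₀ := lt_trans ha₀0 hx₀mem.1
  have hx₀1 : x₀ < 1 := hx₀mem.2
  have hfx₀' : 1 / x₀ ^ 2 - Real.exp (-x₀) / (1 - Real.exp (-x₀)) ^ 2 = p := hfx₀
  refine ⟨x₀, ⟨⟨hx₀0, hx₀1⟩, hfx₀', ?_, ?_⟩, ?_⟩
  · intro x hx
    have h := Fn_anti hx.1 hx.2 hx₀1.le
    have h2 : Fn x₀ = p := hfx₀
    show p < Fn x
    linarith
  · intro x hx
    have h := Fn_anti hx₀0 hx.1 hx.2.le
    have h2 : Fn x₀ = p := hfx₀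
    show Fn x < p
    linarith
  · rintro y ⟨⟨hy0, hy1⟩, hfy, -, -⟩
    have hfy' : Fn y = p := hfy
    have h2 : Fn x₀ = p := hfx₀
    by_contra hne
    rcases lt_or_gt_of_ne hne with h | h
    · have := Fn_anti hy0 h hx₀1.le
      linarith
    · have := Fn_anti hx₀0 h hy1.le
      linarith
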